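/- Let Z : 𝕂 × 𝕂 → A_X be a continuous cotranslation such that for every r ∈ 𝕂 the map t ↦ Z(r, t) is differentiable at t = 0. Then for every r, t ∈ 𝕂 the map t ↦ Z(r, t) is differentiable and ∂₂Z(r, t) = ∂₂Z(r + t, 0) ∘ Z(r, t). -/

import Mathlib

/-- If a continuous cotranslation `Z` is differentiable in the second argument at `0`
(with derivative `D₀ r` there), then `t ↦ Z(r,t)` is differentiable everywhere and
`∂₂Z(r,t) = ∂₂Z(r+t,0) ∘ Z(r,t)`. -/
theorem stmt_10 {𝕂 X : Type*} [RCLike 𝕂] [NormedAddCommGroup X] [NormedSpace 𝕂 X]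
    (Z : 𝕂 → 𝕂 → (X ≃L[𝕂] X))
    (hZ : ∀ r s t : 𝕂, Z r (t + s) = Z (s + r) t * Z r s)
    (hcont : Continuous fun p : 𝕂 × 𝕂 => ((Z p.1 p.2 : X →L[𝕂] X)))
    (D₀ : 𝕂 → (X →L[𝕂] X))
    (hD₀ : ∀ r : 𝕂, HasDerivAt (fun t => ((Z r t : X →L[𝕂] X))) (D₀ r) 0) :
    ∀ r t : 𝕂, HasDerivAt (fun s => ((Z r s : X →L[𝕂] X)))
      ((D₀ (r + t)).comp ((Z r t : X →L[𝕂] X))) t := by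
  intro r t
  have hshift : HasDerivAt (fun s : 𝕂 => ((Z (t + r) (s - t) : X →L[𝕂] X))) (D₀ (t + r)) t := by
    have h1 : HasDerivAt (fun s : 𝕂 => s - t) 1 t := (hasDerivAt_id t).sub_const t
    simpa [Function.comp_def] using (hD₀ (t + r)).scomp_of_eq t h1 (by simp)
  have hmul : HasDerivAt (fun s : 𝕂 => ((Z (t + r) (s - t) : X →L[𝕂] X)) * ((Z r t : X →L[𝕂] X)))
      (D₀ (t + r) * ((Z r t : X →L[𝕂] X))) t := hshift.mul_const _
  have heq : (fun s : 𝕂 => ((Z r s : X →L[𝕂] X))) =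
      fun s : 𝕂 => ((Z (t + r) (s - t) : X →L[𝕂] X)) * ((Z r t : X →L[𝕂] X)) := by
    funext s
    have := hZ r t (s - t)
    rw [sub_add_cancel] at this
    rw [this]
    rfl
  rw [heq, add_comm r t]
  exact hmul
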